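/- Let G = (V,E) be a connected, locally finite simple graph, let x ∈ V be a fixed base vertex, and let u : V → ℝ be harmonic. Then for every integer k ≥ 0, the quantity N(k) = ∑_{y : d(x,y)=k+1} d_in(y)·u(y)² − ∑_{y : d(x,y)=k} d_out(y)·u(y)² is non-negative. -/

import Mathlib

section aux
variable {V : Type*} {G : SimpleGraph V}

lemma aux_dist_adj (hconn : G.Connected) (x : V) {v w : V} (h : G.Adj v w) :
    G.dist x w ≤ G.dist x v + 1 := by
  have h1 : G.dist v w = 1 := SimpleGraph.dist_eq_one_iff_adj.mpr h
  have h2 := hconn.dist_triangle (u := x) (v := v) (w := w)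
  omega

lemma aux_pred (hconn : G.Connected) {x y : V} {n : ℕ} (h : G.dist x y = n + 1) :
    ∃ z, G.Adj z y ∧ G.dist x z = n := by
  obtain ⟨p, hp⟩ := hconn.exists_walk_length_eq_dist x y
  rw [h] at hp
  cases p with
  | nil => simp at hp
  | @cons _ b _ hadj p' =>
    obtain ⟨z, q, h', hc⟩ := SimpleGraph.Walk.exists_cons_eq_concat hadj p'
    have hlen := congrArg SimpleGraph.Walk.length hc
    rw [SimpleGraph.Walk.length_concat] at hlen
    simp only [SimpleGraph.Walk.length_cons] at hp hlen
    have hq : q.length = n := by omega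
    have h1 : G.dist x z ≤ n := hq ▸ SimpleGraph.dist_le q
    have h2 : G.dist x y ≤ G.dist x z + 1 := aux_dist_adj hconn x h'
    exact ⟨z, h', by omega⟩

lemma aux_ball_finite (hconn : G.Connected) (hlf : ∀ v : V, (G.neighborSet v).Finite)
    (x : V) : ∀ n : ℕ, {y | G.dist x y ≤ n}.Finite := by
  intro n
  induction n with
  | zero =>
    apply Set.Finite.subset (Set.finite_singleton x)
    intro y hy
    simp only [Set.mem_setOf_eq, Nat.le_zero] at hy
    simp [(hconn.dist_eq_zero_iff.mp hy).symm]
  | succ n ih =>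
    apply Set.Finite.subset (ih.union (Set.Finite.biUnion ih (fun v _ => hlf v)))
    intro y hy
    simp only [Set.mem_setOf_eq] at hy
    by_cases hle : G.dist x y ≤ n
    · exact Or.inl hle
    · have hy' : G.dist x y = n + 1 := by omega
      obtain ⟨z, hz, hdz⟩ := aux_pred hconn hy'
      exact Or.inr (Set.mem_biUnion (by simp [hdz]) hz)

end aux

/-- In-degree of `v` relative to base vertex `x`: the number of neighbors of `v`
whose distance to `x` is one less than that of `v`. -/
noncomputable def din {V : Type*} (G : SimpleGraph V) (x v : V) : ℕ :=
  {w | G.Adj v w ∧ G.dist x w = G.dist x v - 1}.ncard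

/-- Out-degree of `v` relative to base vertex `x`: the number of neighbors of `v`
whose distance to `x` is one more than that of `v`. -/
noncomputable def dout {V : Type*} (G : SimpleGraph V) (x v : V) : ℕ :=
  {w | G.Adj v w ∧ G.dist x w = G.dist x v + 1}.ncard

/-- `u` is harmonic: at every vertex the sum of differences over neighbors vanishes. -/
def GraphHarmonic {V : Type*} (G : SimpleGraph V) (u : V → ℝ) : Prop :=
  ∀ v : V, ∑ᶠ y ∈ G.neighborSet v, (u y - u v) = 0

/-- The discrete Almgren quantity `N(k)`. -/
noncomputable def almgrenN {V : Type*} (G : SimpleGraph V) (x : V) (u : V → ℝ) (k : ℕ) : ℝ :=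
  (∑ᶠ y ∈ {y | G.dist x y = k + 1}, (din G x y : ℝ) * u y ^ 2) -
    ∑ᶠ y ∈ {y | G.dist x y = k}, (dout G x y : ℝ) * u y ^ 2

/-- for a harmonic function on a connected, locally finite simple graph,
the discrete Almgren quantity `N(k)` is non-negative for every `k ≥ 0`. -/
theorem almgren_nonneg {V : Type*} (G : SimpleGraph V) (hconn : G.Connected)
    (hlf : ∀ v : V, (G.neighborSet v).Finite) (x : V) (u : V → ℝ)
    (hu : GraphHarmonic G u) (k : ℕ) :
    0 ≤ almgrenN G x u k := by
  classical
  have hball := aux_ball_finite hconn hlf x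
  have hsph : ∀ n : ℕ, {y | G.dist x y = n}.Finite := fun n =>
    (hball n).subset (fun y hy => le_of_eq hy)
  set S : ℕ → Finset V := fun n => (hsph n).toFinset with hS
  set B : Finset V := (hball k).toFinset with hB
  set nbr : V → Finset V := fun v => (hlf v).toFinset with hnbr
  have hmemS : ∀ n y, y ∈ S n ↔ G.dist x y = n := by
    intro n y; simp [hS, Set.Finite.mem_toFinset]
  have hmemB : ∀ y, y ∈ B ↔ G.dist x y ≤ k := by
    intro y; simp [hB, Set.Finite.mem_toFinset]
  have hmemN : ∀ v y, y ∈ nbr v ↔ G.Adj v y := by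
    intro v y; simp [hnbr, Set.Finite.mem_toFinset]
  -- step 1: finsums to finset sums
  have e1 : almgrenN G x u k =
      (∑ y ∈ S (k+1), (din G x y : ℝ) * u y ^ 2) -
        ∑ y ∈ S k, (dout G x y : ℝ) * u y ^ 2 := by
    rw [almgrenN]
    rw [← Set.Finite.coe_toFinset (hsph (k+1)), ← Set.Finite.coe_toFinset (hsph k),
      finsum_mem_coe_finset, finsum_mem_coe_finset]
  -- step 2: din / dout as cards
  have hdin : ∀ y ∈ S (k+1), (din G x y : ℝ) = ((nbr y ∩ S k).card : ℝ) := by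
    intro y hy
    rw [hmemS] at hy
    have hset : {w | G.Adj y w ∧ G.dist x w = G.dist x y - 1} = ↑(nbr y ∩ S k) := by
      ext w; simp [Finset.mem_inter, hmemN, hmemS, hy]
    rw [din, hset, Set.ncard_coe_finset]
  have hdout : ∀ y ∈ S k, (dout G x y : ℝ) = ((nbr y ∩ S (k+1)).card : ℝ) := by
    intro y hy
    rw [hmemS] at hy
    have hset : {w | G.Adj y w ∧ G.dist x w = G.dist x y + 1} = ↑(nbr y ∩ S (k+1)) := by
      ext w; simp [Finset.mem_inter, hmemN, hmemS, hy]
    rw [dout, hset, Set.ncard_coe_finset]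
  -- step 3: card sums as double sums, then swap
  have hsymm : ∀ v y : V, v ∈ S (k+1) ∧ y ∈ nbr v ∩ S k ↔
      v ∈ nbr y ∩ S (k+1) ∧ y ∈ S k := by
    intro v y
    simp only [Finset.mem_inter, hmemN, hmemS]
    constructor
    · rintro ⟨h1, h2, h3⟩; exact ⟨⟨h2.symm, h1⟩, h3⟩
    · rintro ⟨⟨h2, h1⟩, h3⟩; exact ⟨h1, h2.symm, h3⟩
  have e2 : ∑ y ∈ S (k+1), (din G x y : ℝ) * u y ^ 2 =
      ∑ v ∈ S k, ∑ y ∈ nbr v ∩ S (k+1), u y ^ 2 := by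
    rw [Finset.sum_congr rfl (fun y hy => by rw [hdin y hy])]
    have : ∀ y ∈ S (k+1), ((nbr y ∩ S k).card : ℝ) * u y ^ 2 =
        ∑ z ∈ nbr y ∩ S k, u y ^ 2 := by
      intro y _; rw [Finset.sum_const, nsmul_eq_mul]
    rw [Finset.sum_congr rfl this]
    exact Finset.sum_comm' hsymm
  have e3 : ∑ y ∈ S k, (dout G x y : ℝ) * u y ^ 2 =
      ∑ v ∈ S k, ∑ y ∈ nbr v ∩ S (k+1), u v ^ 2 := by
    refine Finset.sum_congr rfl (fun v hv => ?_)
    rw [hdout v hv, Finset.sum_const, nsmul_eq_mul]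
  have e4 : almgrenN G x u k =
      ∑ v ∈ S k, ∑ y ∈ nbr v ∩ S (k+1), (u y ^ 2 - u v ^ 2) := by
    rw [e1, e2, e3, ← Finset.sum_sub_distrib]
    exact Finset.sum_congr rfl (fun v _ => (Finset.sum_sub_distrib _ _).symm)
  -- harmonicity in finset form
  have hharm : ∀ v : V, ∑ y ∈ nbr v, (u y - u v) = 0 := by
    intro v
    have h := hu v
    rwa [← Set.Finite.coe_toFinset (hlf v), finsum_mem_coe_finset] at h
  -- split over ball
  set g : V → V → ℝ := fun v y => u v * (u y - u v) with hg
  have hzero : (0 : ℝ) = (∑ v ∈ B, ∑ y ∈ nbr v ∩ B, g v y) +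
      ∑ v ∈ B, ∑ y ∈ nbr v \ B, g v y := by
    rw [← Finset.sum_add_distrib]
    have : ∀ v ∈ B, (∑ y ∈ nbr v ∩ B, g v y) + ∑ y ∈ nbr v \ B, g v y = 0 := by
      intro v _
      rw [Finset.sum_inter_add_sum_sdiff]
      calc ∑ y ∈ nbr v, g v y = u v * ∑ y ∈ nbr v, (u y - u v) := by
            rw [Finset.mul_sum]
        _ = 0 := by rw [hharm v, mul_zero]
    rw [Finset.sum_congr rfl this, Finset.sum_const_zero]
  -- boundary term
  have hbd : ∑ v ∈ B, ∑ y ∈ nbr v \ B, g v y =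
      ∑ v ∈ S k, ∑ y ∈ nbr v ∩ S (k+1), g v y := by
    have hsub : S k ⊆ B := by
      intro v hv; rw [hmemB]; rw [hmemS] at hv; omega
    rw [← Finset.sum_subset hsub]
    · refine Finset.sum_congr rfl (fun v hv => ?_)
      rw [hmemS] at hv
      congr 1
      ext y
      simp only [Finset.mem_sdiff, Finset.mem_inter, hmemN, hmemB, hmemS]
      constructor
      · rintro ⟨h1, h2⟩
        have := aux_dist_adj hconn x h1
        exact ⟨h1, by omega⟩
      · rintro ⟨h1, h2⟩; exact ⟨h1, by omega⟩
    · intro v hv hv'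
      rw [hmemB] at hv; rw [hmemS] at hv'
      have : nbr v \ B = ∅ := by
        rw [Finset.sdiff_eq_empty_iff_subset]
        intro y hy
        rw [hmemN] at hy; rw [hmemB]
        have := aux_dist_adj hconn x hy
        omega
      rw [this, Finset.sum_empty]
  -- interior term nonpositive via symmetrization
  have hsymmB : ∀ v y : V, v ∈ B ∧ y ∈ nbr v ∩ B ↔ v ∈ nbr y ∩ B ∧ y ∈ B := by
    intro v y
    simp only [Finset.mem_inter, hmemN]
    constructor
    · rintro ⟨h1, h2, h3⟩; exact ⟨⟨h2.symm, h1⟩, h3⟩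
    · rintro ⟨⟨h2, h1⟩, h3⟩; exact ⟨h1, h2.symm, h3⟩
  have hIswap : ∑ v ∈ B, ∑ y ∈ nbr v ∩ B, g v y =
      ∑ v ∈ B, ∑ y ∈ nbr v ∩ B, g y v := by
    exact Finset.sum_comm' hsymmB
  have hI2 : (∑ v ∈ B, ∑ y ∈ nbr v ∩ B, g v y) +
      (∑ v ∈ B, ∑ y ∈ nbr v ∩ B, g v y) =
      -∑ v ∈ B, ∑ y ∈ nbr v ∩ B, (u y - u v) ^ 2 := by
    nth_rewrite 2 [hIswap]
    rw [← Finset.sum_neg_distrib, ← Finset.sum_add_distrib]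
    refine Finset.sum_congr rfl (fun v _ => ?_)
    rw [← Finset.sum_neg_distrib, ← Finset.sum_add_distrib]
    refine Finset.sum_congr rfl (fun y _ => ?_)
    simp only [hg]; ring
  have hInonpos : ∑ v ∈ B, ∑ y ∈ nbr v ∩ B, g v y ≤ 0 := by
    have hP : 0 ≤ ∑ v ∈ B, ∑ y ∈ nbr v ∩ B, (u y - u v) ^ 2 :=
      Finset.sum_nonneg (fun v _ => Finset.sum_nonneg (fun y _ => sq_nonneg _))
    nlinarith [hI2]
  have hT : 0 ≤ ∑ v ∈ S k, ∑ y ∈ nbr v ∩ S (k+1), g v y := by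
    rw [← hbd]; linarith [hzero, hInonpos]
  -- final assembly
  rw [e4]
  have hfin : ∑ v ∈ S k, ∑ y ∈ nbr v ∩ S (k+1), (u y ^ 2 - u v ^ 2) =
      (∑ v ∈ S k, ∑ y ∈ nbr v ∩ S (k+1), (u y - u v) ^ 2) +
        2 * ∑ v ∈ S k, ∑ y ∈ nbr v ∩ S (k+1), g v y := by
    rw [Finset.mul_sum, ← Finset.sum_add_distrib]
    refine Finset.sum_congr rfl (fun v _ => ?_)
    rw [Finset.mul_sum, ← Finset.sum_add_distrib]
    refine Finset.sum_congr rfl (fun y _ => ?_)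
    simp only [hg]; ring
  rw [hfin]
  have hQ : 0 ≤ ∑ v ∈ S k, ∑ y ∈ nbr v ∩ S (k+1), (u y - u v) ^ 2 :=
    Finset.sum_nonneg (fun v _ => Finset.sum_nonneg (fun y _ => sq_nonneg _))
  linarith
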